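/- Let V : ℝ → ℝ be twice differentiable. Define Y : (0,∞) → ℝ by Y(z) = z²·V(log z). Then for all z > 0: Y(z)·Y''(z) + Y'(z)² + 3z·Y'(z) + Y(z) + 2z² = z²·[V·V'' + V'² + 7V·V' + 3V' + 6V² + 7V + 2](log z). In particular, Y satisfies Y·Y'' + Y'² + 3zY' + Y + 2z² = 0 on (0,∞) if and only if V satisfies V·V'' + V'² + 7V·V' + 3V' + 6V² + 7V + 2 = 0 on ℝ. -/

import Mathlib

lemma comp_log_hasDerivAt (V : ℝ → ℝ) (hV : Differentiable ℝ V) {z : ℝ} (hz : 0 < z) :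
    HasDerivAt (fun x => V (Real.log x)) (deriv V (Real.log z) * z⁻¹) z :=
  (hV (Real.log z)).hasDerivAt.comp z (Real.hasDerivAt_log hz.ne')

/-- for twice differentiable `V` and `Y(z) = z²·V(log z)` on `(0,∞)`,
`Y·Y'' + Y'² + 3zY' + Y + 2z² = z²·(V·V'' + V'² + 7VV' + 3V' + 6V² + 7V + 2)(log z)`;
in particular `Y` solves its equation on `(0,∞)` iff `V` solves
`V·V'' + V'² + 7VV' + 3V' + 6V² + 7V + 2 = 0` on `ℝ`. -/
theorem stmt_15 (V : ℝ → ℝ)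
    (hV1 : Differentiable ℝ V) (hV2 : Differentiable ℝ (deriv V))
    (Y : ℝ → ℝ) (hY : ∀ z : ℝ, 0 < z → Y z = z ^ 2 * V (Real.log z)) :
    (∀ z : ℝ, 0 < z →
      Y z * deriv (deriv Y) z + (deriv Y z) ^ 2 + 3 * z * deriv Y z + Y z + 2 * z ^ 2
        = z ^ 2 * (V (Real.log z) * deriv (deriv V) (Real.log z)
            + (deriv V (Real.log z)) ^ 2
            + 7 * V (Real.log z) * deriv V (Real.log z) + 3 * deriv V (Real.log z)
            + 6 * V (Real.log z) ^ 2 + 7 * V (Real.log z) + 2)) ∧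
    ((∀ z : ℝ, 0 < z →
        Y z * deriv (deriv Y) z + (deriv Y z) ^ 2 + 3 * z * deriv Y z + Y z + 2 * z ^ 2 = 0)
      ↔ (∀ s : ℝ, V s * deriv (deriv V) s + (deriv V s) ^ 2 + 7 * V s * deriv V s
          + 3 * deriv V s + 6 * V s ^ 2 + 7 * V s + 2 = 0)) := by
  have hd1 : ∀ z : ℝ, 0 < z →
      deriv Y z = 2 * z * V (Real.log z) + z * deriv V (Real.log z) := by
    intro z hz
    have hev : Y =ᶠ[nhds z] fun x => x ^ 2 * V (Real.log x) :=
      Filter.eventuallyEq_of_mem (isOpen_Ioi.mem_nhds hz) (fun x hx => hY x hx)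
    rw [hev.deriv_eq]
    have h : HasDerivAt (fun x => x ^ 2 * V (Real.log x))
        (2 * z ^ 1 * V (Real.log z) + z ^ 2 * (deriv V (Real.log z) * z⁻¹)) z := by
      have : HasDerivAt (fun x => x ^ 2 * V (Real.log x))
          (((2:ℕ):ℝ) * z ^ (2 - 1) * V (Real.log z) + z ^ 2 * (deriv V (Real.log z) * z⁻¹)) z :=
        (hasDerivAt_pow 2 z).mul (comp_log_hasDerivAt V hV1 hz)
      simpa using this
    rw [h.deriv]
    field_simp
  have hd2 : ∀ z : ℝ, 0 < z →
      deriv (deriv Y) z = 2 * V (Real.log z) + 3 * deriv V (Real.log z)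
        + deriv (deriv V) (Real.log z) := by
    intro z hz
    have hev : deriv Y =ᶠ[nhds z]
        fun x => 2 * x * V (Real.log x) + x * deriv V (Real.log x) :=
      Filter.eventuallyEq_of_mem (isOpen_Ioi.mem_nhds hz) (fun x hx => hd1 x hx)
    rw [hev.deriv_eq]
    have h1 : HasDerivAt (fun x : ℝ => 2 * x * V (Real.log x))
        (2 * V (Real.log z) + 2 * z * (deriv V (Real.log z) * z⁻¹)) z := by
      have : HasDerivAt (fun x : ℝ => 2 * x * V (Real.log x))
          (2 * 1 * V (Real.log z) + 2 * z * (deriv V (Real.log z) * z⁻¹)) z :=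
        (((hasDerivAt_id z).const_mul (2:ℝ)).mul (comp_log_hasDerivAt V hV1 hz))
      convert this using 1
      ring
    have h2 : HasDerivAt (fun x : ℝ => x * deriv V (Real.log x))
        (1 * deriv V (Real.log z) + z * (deriv (deriv V) (Real.log z) * z⁻¹)) z :=
      (hasDerivAt_id z).mul (comp_log_hasDerivAt (deriv V) hV2 hz)
    have h3 : HasDerivAt (fun x : ℝ => 2 * x * V (Real.log x) + x * deriv V (Real.log x)) _ z :=
      h1.add h2
    rw [h3.deriv]
    field_simp
    ring
  have key : ∀ z : ℝ, 0 < z →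
      Y z * deriv (deriv Y) z + (deriv Y z) ^ 2 + 3 * z * deriv Y z + Y z + 2 * z ^ 2
        = z ^ 2 * (V (Real.log z) * deriv (deriv V) (Real.log z)
            + (deriv V (Real.log z)) ^ 2
            + 7 * V (Real.log z) * deriv V (Real.log z) + 3 * deriv V (Real.log z)
            + 6 * V (Real.log z) ^ 2 + 7 * V (Real.log z) + 2) := by
    intro z hz
    rw [hY z hz, hd1 z hz, hd2 z hz]
    ring
  refine ⟨key, ?_, ?_⟩
  · intro h s
    have hz : (0:ℝ) < Real.exp s := Real.exp_pos s
    have := (key _ hz).symm.trans (h _ hz)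
    rw [Real.log_exp] at this
    have hne : (Real.exp s) ^ 2 ≠ 0 := pow_ne_zero _ hz.ne'
    exact (mul_eq_zero.mp this).resolve_left hne
  · intro h z hz
    rw [key z hz, h (Real.log z), mul_zero]
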